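/- Let K be a finite field, n a positive integer, and f : K^n → K^n a map whose dependency graph is acyclic. Then f has no nontrivial periodic orbits: for every x ∈ K^n and every m ≥ 1, if f^m(x) = x then x is the fixed point of f (i.e., f(x) = x). -/

import Mathlib

/-- The coordinate function `h : K^n → K` depends on variable `x_j`. -/
def CoordDependsOn {n : ℕ} {K : Type*} (h : (Fin n → K) → K) (j : Fin n) : Prop :=
  ∃ (x : Fin n → K) (p q : K), p ≠ q ∧
    h (Function.update x j p) ≠ h (Function.update x j q)

/-- Edge from `j` to `i` in the dependency graph of `f`. -/
def DepEdge {n : ℕ} {K : Type*} (f : (Fin n → K) → (Fin n → K)) (j i : Fin n) : Prop :=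
  CoordDependsOn (fun x => f x i) j

/-- The dependency graph of `f` is acyclic (no directed cycles, no self-loops). -/
def DepAcyclic {n : ℕ} {K : Type*} (f : (Fin n → K) → (Fin n → K)) : Prop :=
  ¬ ∃ (m : ℕ) (v : ℕ → Fin n), 1 ≤ m ∧ v 0 = v m ∧
      ∀ t < m, DepEdge f (v t) (v (t + 1))

lemma notDependsOn_update {n : ℕ} {K : Type*} {h : (Fin n → K) → K} {j : Fin n}
    (hd : ¬ CoordDependsOn h j) (x : Fin n → K) (p : K) :
    h (Function.update x j p) = h x := by
  by_cases hp : p = x j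
  · rw [hp, Function.update_eq_self]
  · by_contra hne
    exact hd ⟨x, p, x j, hp, by rwa [Function.update_eq_self]⟩

lemma agree_on_deps {n : ℕ} {K : Type*} (f : (Fin n → K) → (Fin n → K)) (i : Fin n) :
    ∀ (y z : Fin n → K), (∀ j, DepEdge f j i → y j = z j) → f y i = f z i := by
  have key : ∀ (s : Finset (Fin n)) (y z : Fin n → K),
      (∀ j, y j ≠ z j → j ∈ s) → (∀ j, DepEdge f j i → y j = z j) → f y i = f z i := by
    intro s
    induction s using Finset.induction_on with
    | empty =>
      intro y z hs _
      have : y = z := funext fun j => by_contra fun hne => absurd (hs j hne) (by simp)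
      rw [this]
    | @insert a s ha ih =>
      intro y z hs hdep
      by_cases hya : y a = z a
      · exact ih y z (fun j hj => by
          rcases Finset.mem_insert.mp (hs j hj) with h | h
          · exact absurd (h ▸ hya) hj
          · exact h) hdep
      · have hnd : ¬ DepEdge f a i := fun hd => hya (hdep a hd)
        have h1 : f y i = f (Function.update y a (z a)) i :=
          (notDependsOn_update hnd y (z a)).symm
        rw [h1]
        apply ih
        · intro j hj
          by_cases hja : j = a
          · subst hja; simp at hj
          · rw [Function.update_of_ne hja] at hj
            rcases Finset.mem_insert.mp (hs j hj) with h | h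
            · exact absurd h hja
            · exact h
        · intro j hd
          by_cases hja : j = a
          · exact absurd (hja ▸ hd) hnd
          · rw [Function.update_of_ne hja]; exact hdep j hd
  intro y z h
  exact key Finset.univ y z (fun j _ => Finset.mem_univ j) h

lemma transGen_path {α : Type*} (r : α → α → Prop) {a b : α}
    (h : Relation.TransGen r a b) :
    ∃ (m : ℕ) (v : ℕ → α), 1 ≤ m ∧ v 0 = a ∧ v m = b ∧ ∀ t < m, r (v t) (v (t + 1)) := by
  induction h with
  | @single c hr =>
    exact ⟨1, fun t => if t = 0 then a else c, le_refl 1, by simp, by simp,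
      fun t ht => by interval_cases t; simpa using hr⟩
  | @tail d c _ hr ih =>
    obtain ⟨m, v, hm, hv0, hvm, hstep⟩ := ih
    refine ⟨m + 1, fun t => if t ≤ m then v t else c, by omega, by simp [hv0],
      by simp, ?_⟩
    intro t ht
    by_cases htm : t = m
    · simp only [if_pos (le_of_eq htm), if_neg (show ¬ t + 1 ≤ m by omega)]
      rw [htm, hvm]; exact hr
    · have h1 : t ≤ m := by omega
      have h2 : t + 1 ≤ m := by omega
      simp only [if_pos h1, if_pos h2]
      exact hstep t (by omega)

lemma depEdge_wf {n : ℕ} {K : Type*} (f : (Fin n → K) → (Fin n → K))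
    (hf : DepAcyclic f) : WellFounded (DepEdge f) := by
  have hirr : ∀ i : Fin n, ¬ Relation.TransGen (DepEdge f) i i := by
    intro i hi
    obtain ⟨m, v, hm, hv0, hvm, hstep⟩ := transGen_path _ hi
    exact hf ⟨m, v, hm, by rw [hv0, hvm], hstep⟩
  have : IsIrrefl (Fin n) (Relation.TransGen (DepEdge f)) := ⟨hirr⟩
  have hwf : WellFounded (Relation.TransGen (DepEdge f)) :=
    Finite.wellFounded_of_trans_of_irrefl _
  exact Subrelation.wf (fun h => Relation.TransGen.single h) hwf

/-- A map `f : K^n → K^n` with acyclic dependency graph has no nontrivial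
periodic orbits: any periodic point is a fixed point. -/
theorem no_periodic_orbits_of_acyclic {K : Type*} [Field K] [Fintype K] {n : ℕ}
    (hn : 0 < n) (f : (Fin n → K) → (Fin n → K)) (hf : DepAcyclic f) :
    ∀ (x : Fin n → K) (m : ℕ), 1 ≤ m → (f^[m]) x = x → f x = x := by
  intro x m hm hper
  have key : ∀ i : Fin n, ∀ t : ℕ, (f^[t] x) i = x i := by
    intro i
    induction i using WellFounded.induction (depEdge_wf f hf) with
    | _ i ih =>
      have hconst : ∀ t : ℕ, f (f^[t] x) i = f x i := by
        intro t
        exact agree_on_deps f i _ _ (fun j hj => ih j hj t)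
      have hfix : f x i = x i := by
        obtain ⟨m', rfl⟩ : ∃ m', m = m' + 1 := ⟨m - 1, by omega⟩
        calc f x i = f (f^[m'] x) i := (hconst m').symm
          _ = (f^[m' + 1] x) i := by rw [Function.iterate_succ_apply']
          _ = x i := by rw [hper]
      intro t
      cases t with
      | zero => rfl
      | succ s =>
        rw [Function.iterate_succ_apply', hconst s, hfix]
  funext i
  have := key i 1
  simpa using this
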